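/- The spectral radius of the error iteration matrix T := I_{n+m} − P⁻¹·K equals the spectral radius of the m×m matrix Z := Ξ·A⁻¹·Bᵀ·H_p⁻¹, i.e., ρ(T) = ρ(Z), where the spectral radius of a square complex matrix is the maximum of the absolute values of its eigenvalues. -/

import Mathlib

open Matrix

/-- Membership in the spectrum of a matrix via the determinant. -/
lemma mem_spectrum_iff_det {k : Type*} [Fintype k] [DecidableEq k]
    (M : Matrix k k ℂ) (z : ℂ) :
    z ∈ spectrum ℂ M ↔ (z • (1 : Matrix k k ℂ) - M).det = 0 := by
  rw [spectrum.mem_iff, Matrix.isUnit_iff_isUnit_det, isUnit_iff_ne_zero, not_ne_iff,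
    Algebra.algebraMap_eq_smul_one]

/-- One direction of "nonzero spectra of `M*N` and `N*M` agree". -/
lemma mem_spectrum_mul_comm_aux {p q : Type*} [Fintype p] [Fintype q]
    [DecidableEq p] [DecidableEq q]
    (M : Matrix p q ℂ) (N : Matrix q p ℂ) {z : ℂ} (hz : z ≠ 0)
    (h : z ∈ spectrum ℂ (M * N)) : z ∈ spectrum ℂ (N * M) := by
  rw [mem_spectrum_iff_det] at h ⊢
  rw [← Matrix.exists_mulVec_eq_zero_iff] at h ⊢
  obtain ⟨v, hv, hveq⟩ := h
  have hMN : (M * N) *ᵥ v = z • v := by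
    have := congrArg (fun w => (M * N) *ᵥ v + w) hveq
    simpa [Matrix.sub_mulVec, Matrix.smul_mulVec] using this.symm
  refine ⟨N *ᵥ v, ?_, ?_⟩
  · intro h0
    apply hv
    have : (M * N) *ᵥ v = 0 := by
      rw [← Matrix.mulVec_mulVec, h0, Matrix.mulVec_zero]
    rw [hMN] at this
    exact (smul_eq_zero.mp this).resolve_left hz
  · have hMNv : M *ᵥ (N *ᵥ v) = z • v := by rw [Matrix.mulVec_mulVec]; exact hMN
    have : (N * M) *ᵥ (N *ᵥ v) = z • (N *ᵥ v) := by
      rw [← Matrix.mulVec_mulVec, hMNv, Matrix.mulVec_smul]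
    rw [Matrix.sub_mulVec, Matrix.smul_mulVec, Matrix.one_mulVec, this, sub_self]

/-- Nonzero spectra of `M*N` and `N*M` agree. -/
lemma mem_spectrum_mul_comm {p q : Type*} [Fintype p] [Fintype q]
    [DecidableEq p] [DecidableEq q]
    (M : Matrix p q ℂ) (N : Matrix q p ℂ) {z : ℂ} (hz : z ≠ 0) :
    z ∈ spectrum ℂ (M * N) ↔ z ∈ spectrum ℂ (N * M) :=
  ⟨mem_spectrum_mul_comm_aux M N hz, mem_spectrum_mul_comm_aux N M hz⟩

/-- Subtraction of block matrices. -/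
lemma fromBlocks_sub' {l o p q R : Type*} [Sub R]
    (A : Matrix l p R) (B : Matrix l q R) (C : Matrix o p R) (D : Matrix o q R)
    (A' : Matrix l p R) (B' : Matrix l q R) (C' : Matrix o p R) (D' : Matrix o q R) :
    fromBlocks A B C D - fromBlocks A' B' C' D' =
      fromBlocks (A - A') (B - B') (C - C') (D - D') := by
  ext (i | i) (j | j) <;> simp [Matrix.fromBlocks]

/-- Spectrum of a block matrix `fromBlocks X 0 Y 0`. -/
lemma spectrum_fromBlocks_zero {p q : Type*} [Fintype p] [Fintype q]
    [DecidableEq p] [DecidableEq q] [Nonempty q]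
    (X : Matrix p p ℂ) (Y : Matrix q p ℂ) :
    spectrum ℂ (fromBlocks X 0 Y (0 : Matrix q q ℂ)) = spectrum ℂ X ∪ {0} := by
  ext z
  rw [mem_spectrum_iff_det]
  have hb : z • (1 : Matrix (p ⊕ q) (p ⊕ q) ℂ) - fromBlocks X 0 Y 0 =
      fromBlocks (z • 1 - X) 0 (-Y) (z • (1 : Matrix q q ℂ)) := by
    rw [← Matrix.fromBlocks_one, Matrix.fromBlocks_smul, fromBlocks_sub']
    simp
  rw [hb, Matrix.det_fromBlocks_zero₁₂, mul_eq_zero, Matrix.det_smul, Matrix.det_one, mul_one]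
  simp only [Set.mem_union, Set.mem_singleton_iff, mem_spectrum_iff_det]
  constructor
  · rintro (h | h)
    · exact Or.inl h
    · exact Or.inr (pow_eq_zero_iff (Fintype.card_ne_zero) |>.mp h)
  · rintro (h | h)
    · exact Or.inl h
    · exact Or.inr (by rw [h, zero_pow Fintype.card_ne_zero])

/-- The spectral radius of the error iteration matrix `T = I − P⁻¹·K`
equals the spectral radius of `Z = Ξ·A⁻¹·Bᵀ·Hₚ⁻¹`, where the spectral radius is the
maximum of the absolute values of the eigenvalues. -/
theorem spectral_radius_T_eq_Z (n m : ℕ) (hn : 0 < n) (hm : 0 < m)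
    (A : Matrix (Fin n) (Fin n) ℂ) (hA : IsUnit A)
    (B : Matrix (Fin m) (Fin n) ℂ)
    (C Ap : Matrix (Fin m) (Fin m) ℂ)
    (Ξ : Matrix (Fin m) (Fin n) ℂ) (hΞ : Ξ = B * A - Ap * B)
    (Hp : Matrix (Fin m) (Fin m) ℂ) (hHp : Hp = B * Bᵀ + Ap * C) (hHpu : IsUnit Hp)
    (K : Matrix (Fin n ⊕ Fin m) (Fin n ⊕ Fin m) ℂ) (hK : K = fromBlocks A Bᵀ Ξ Hp)
    (P : Matrix (Fin n ⊕ Fin m) (Fin n ⊕ Fin m) ℂ)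
    (hP : P = fromBlocks A Bᵀ (0 : Matrix (Fin m) (Fin n) ℂ) Hp)
    (T : Matrix (Fin n ⊕ Fin m) (Fin n ⊕ Fin m) ℂ) (hT : T = 1 - P⁻¹ * K)
    (Z : Matrix (Fin m) (Fin m) ℂ) (hZ : Z = Ξ * A⁻¹ * Bᵀ * Hp⁻¹) :
    sSup ((fun z : ℂ => ‖z‖) '' spectrum ℂ T) =
      sSup ((fun z : ℂ => ‖z‖) '' spectrum ℂ Z) := by
  haveI : Nonempty (Fin m) := ⟨⟨0, hm⟩⟩
  -- Compute T as a block matrix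
  have hPinv : P⁻¹ = fromBlocks A⁻¹ (-(A⁻¹ * Bᵀ * Hp⁻¹)) 0 Hp⁻¹ := by
    rw [hP, Matrix.inv_fromBlocks_zero₂₁_of_isUnit_iff A Bᵀ Hp (iff_of_true hA hHpu)]
  have hTblock : T = fromBlocks (A⁻¹ * Bᵀ * Hp⁻¹ * Ξ) 0 (-(Hp⁻¹ * Ξ)) 0 := by
    rw [hT, hPinv, hK, Matrix.fromBlocks_multiply, ← Matrix.fromBlocks_one,
      fromBlocks_sub']
    have hAdet : IsUnit A.det := (Matrix.isUnit_iff_isUnit_det A).mp hA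
    have hHdet : IsUnit Hp.det := (Matrix.isUnit_iff_isUnit_det Hp).mp hHpu
    rw [Matrix.fromBlocks_inj]
    refine ⟨?_, ?_, ?_, ?_⟩
    · rw [Matrix.nonsing_inv_mul A hAdet, Matrix.neg_mul]
      abel
    · rw [Matrix.neg_mul, Matrix.mul_assoc (A⁻¹ * Bᵀ) Hp⁻¹ Hp, Matrix.nonsing_inv_mul Hp hHdet,
        Matrix.mul_one]
      abel
    · simp
    · rw [Matrix.nonsing_inv_mul Hp hHdet]
      simp
  -- Spectra
  have hspecT : spectrum ℂ T = spectrum ℂ (A⁻¹ * Bᵀ * Hp⁻¹ * Ξ) ∪ {0} := by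
    rw [hTblock, spectrum_fromBlocks_zero]
  have hXZ : spectrum ℂ (A⁻¹ * Bᵀ * Hp⁻¹ * Ξ) ∪ {0} = spectrum ℂ Z ∪ {0} := by
    ext z
    by_cases hz : z = 0
    · simp [hz]
    · simp only [Set.mem_union, Set.mem_singleton_iff, hz, or_false]
      have h2 : Z = Ξ * (A⁻¹ * Bᵀ * Hp⁻¹) := by rw [hZ]; simp [Matrix.mul_assoc]
      rw [h2]
      exact mem_spectrum_mul_comm _ _ hz
  rw [hspecT, hXZ]
  -- Now handle the sSup
  have hne : (spectrum ℂ Z).Nonempty :=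
    spectrum.nonempty_of_isAlgClosed_of_finiteDimensional ℂ Z
  have hfin : ((fun z : ℂ => ‖z‖) '' spectrum ℂ Z).Finite :=
    (Matrix.finite_spectrum Z).image _
  have himg : (fun z : ℂ => ‖z‖) '' (spectrum ℂ Z ∪ {0}) =
      ((fun z : ℂ => ‖z‖) '' spectrum ℂ Z) ∪ {0} := by
    rw [Set.image_union]
    simp
  rw [himg, csSup_union hfin.bddAbove (hne.image _) (Set.finite_singleton 0).bddAbove
    (Set.singleton_nonempty 0)]
  rw [csSup_singleton]
  refine sup_eq_left.mpr ?_
  obtain ⟨w, hw⟩ := hne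
  exact le_trans (norm_nonneg w) (le_csSup hfin.bddAbove ⟨w, hw, rfl⟩)
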